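/- arXiv:2002.11021 — 5 statements merged into one kernel-verified Lean document; each statement's English description precedes it below -/
import Mathlib

section
/- Let A, B, b be real numbers with B > 0. Define z = exp(b + A) / (exp(b + A) + B) and z̃ = exp(−b + A) / (exp(−b + A) + B). Then (1/z̃ − 1) / (1/z − 1) > 0, so its natural logarithm is well defined, and moreover b = (1/2) · ln((1/z̃ − 1) / (1/z − 1)). -/
open Real

lemma sniff_aux (B x : ℝ) (hB : 0 < B) :
    1 / (exp x / (exp x + B)) - 1 = B / exp x := by
  have h1 : (0:ℝ) < exp x := exp_pos x
  have h2 : (0:ℝ) < exp x + B := by linarith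
  field_simp
  ring

/-- SNIFF bias recovery identity: with `z = exp (b + A) / (exp (b + A) + B)` and
`z̃ = exp (-b + A) / (exp (-b + A) + B)` for `B > 0`, the ratio
`(1/z̃ - 1) / (1/z - 1)` is positive (so its logarithm is well defined) and
`b = (1/2) * log ((1/z̃ - 1) / (1/z - 1))`. -/
theorem sniff_bias_recovery (A B b : ℝ) (hB : 0 < B) :
    0 < (1 / (exp (-b + A) / (exp (-b + A) + B)) - 1) /
          (1 / (exp (b + A) / (exp (b + A) + B)) - 1) ∧
    b = (1 / 2) * Real.log ((1 / (exp (-b + A) / (exp (-b + A) + B)) - 1) /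
          (1 / (exp (b + A) / (exp (b + A) + B)) - 1)) := by
  have key : (1 / (exp (-b + A) / (exp (-b + A) + B)) - 1) /
      (1 / (exp (b + A) / (exp (b + A) + B)) - 1) = exp (2 * b) := by
    rw [sniff_aux B _ hB, sniff_aux B _ hB]
    have h : exp (b + A) = exp (2 * b) * exp (-b + A) := by
      rw [← exp_add]; ring_nf
    rw [div_div_div_eq, div_eq_iff (by positivity), h]; ring
  rw [key]
  refine ⟨exp_pos _, ?_⟩
  rw [log_exp]; ring
end

section
/- (Theorem 1, bias recovery.) Let n, m ∈ ℕ with m ≥ 2, let I : Fin n → ℝ be the input to the last layer, let W : Fin n → Fin m → ℝ be the weight matrix and b : Fin m → ℝ the bias vector. For each j define y_j = b_j + Σ_{i=1}^{n} I_i · W_{i,j} and the softmax output z_j = exp(y_j) / Σ_{j'} exp(y_{j'}). Fix j₀ and define the faulted pre-activations ỹ by ỹ_{j₀} = −b_{j₀} + Σ_i I_i · W_{i,j₀} and ỹ_j = y_j for j ≠ j₀, with faulted output z̃_{j₀} = exp(ỹ_{j₀}) / Σ_{j'} exp(ỹ_{j'}). Then b_{j₀} = (1/2) · ln((1/z̃_{j₀}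 − 1) / (1/z_{j₀} − 1)). -/
open Real Finset

/-- Theorem 1 (bias recovery by SNIFF): the last layer computes pre-activations
`y j = b j + ∑ i, I i * W i j` followed by a softmax; a sign bit flip fault on the
bias `b j₀` replaces `y j₀` by `-b j₀ + ∑ i, I i * W i j₀` (all other coordinates
unchanged). From the correct output `z` and faulted output `z̃` at coordinate `j₀`,
the targeted bias is recovered as `b j₀ = (1/2) * log ((1/z̃ - 1) / (1/z - 1))`. -/
theorem sniff_bias_recovery_last_layer
    (n m : ℕ) (hm : 2 ≤ m)
    (I : Fin n → ℝ) (W : Fin n → Fin m → ℝ) (b : Fin m → ℝ) (j₀ : Fin m)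
    (y : Fin m → ℝ) (hy : ∀ j, y j = b j + ∑ i, I i * W i j)
    (yf : Fin m → ℝ)
    (hyf : yf = Function.update y j₀ (-b j₀ + ∑ i, I i * W i j₀))
    (z zf : ℝ)
    (hz : z = exp (y j₀) / ∑ j' : Fin m, exp (y j'))
    (hzf : zf = exp (yf j₀) / ∑ j' : Fin m, exp (yf j')) :
    b j₀ = (1 / 2) * Real.log ((1 / zf - 1) / (1 / z - 1)) := by
  set s := ∑ j ∈ Finset.univ.erase j₀, exp (y j) with hs_def
  have hs : 0 < s := Finset.sum_pos (fun j _ => exp_pos _) (by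
    rw [← Finset.card_pos, Finset.card_erase_of_mem (Finset.mem_univ _), Finset.card_univ,
      Fintype.card_fin]
    omega)
  have hsum : ∑ j' : Fin m, exp (y j') = exp (y j₀) + s :=
    (Finset.add_sum_erase _ _ (Finset.mem_univ j₀)).symm
  have hsumf : ∑ j' : Fin m, exp (yf j') = exp (yf j₀) + s := by
    rw [← Finset.add_sum_erase _ _ (Finset.mem_univ j₀)]
    congr 1
    refine Finset.sum_congr rfl fun j hj => ?_
    rw [hyf, Function.update_of_ne (Finset.ne_of_mem_erase hj)]
  have hyfj : yf j₀ = -b j₀ + ∑ i, I i * W i j₀ := by rw [hyf]; simp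
  have he1 := exp_pos (y j₀)
  have he2 := exp_pos (yf j₀)
  have h1 : 1 / z - 1 = s / exp (y j₀) := by
    rw [hz, hsum]; field_simp; ring
  have h2 : 1 / zf - 1 = s / exp (yf j₀) := by
    rw [hzf, hsumf]; field_simp; ring
  have h3 : (1 / zf - 1) / (1 / z - 1) = exp (y j₀ - yf j₀) := by
    rw [h1, h2, exp_sub]
    field_simp
  rw [h3, Real.log_exp, hy, hyfj]
  ring
end

section
/- Let α, B, w, t be real numbers with B > 0 and t ≠ 0. Define z = exp(t·w + α) / (exp(t·w + α) + B) and z̃ = exp(−t·w + α) / (exp(−t·w + α) + B). Then (1/z̃ − 1) / (1/z − 1) = exp(2·t·w), and w = (1/(2t)) · ln((1/z̃ − 1) / (1/z − 1)). -/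
open Real

/-- SNIFF weight recovery identity: with `z = exp (t*w + α) / (exp (t*w + α) + B)`
and `z̃ = exp (-(t*w) + α) / (exp (-(t*w) + α) + B)` for `B > 0` and `t ≠ 0`,
`(1/z̃ - 1) / (1/z - 1) = exp (2*t*w)` and
`w = (1/(2*t)) * log ((1/z̃ - 1) / (1/z - 1))`. -/
theorem sniff_weight_ratio_and_recovery (α B w t : ℝ) (hB : 0 < B) (ht : t ≠ 0) :
    (1 / (exp (-(t * w) + α) / (exp (-(t * w) + α) + B)) - 1) /
      (1 / (exp (t * w + α) / (exp (t * w + α) + B)) - 1) = exp (2 * t * w) ∧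
    w = (1 / (2 * t)) * Real.log ((1 / (exp (-(t * w) + α) / (exp (-(t * w) + α) + B)) - 1) /
          (1 / (exp (t * w + α) / (exp (t * w + α) + B)) - 1)) := by
  have h1 : exp (-(t * w) + α) > 0 := exp_pos _
  have h2 : exp (t * w + α) > 0 := exp_pos _
  have e1 : 1 / (exp (-(t * w) + α) / (exp (-(t * w) + α) + B)) - 1
      = B / exp (-(t * w) + α) := by
    field_simp
    ring
  have e2 : 1 / (exp (t * w + α) / (exp (t * w + α) + B)) - 1
      = B / exp (t * w + α) := by
    field_simp
    ring
  have key : (1 / (exp (-(t * w) + α) / (exp (-(t * w) + α) + B)) - 1) /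
      (1 / (exp (t * w + α) / (exp (t * w + α) + B)) - 1) = exp (2 * t * w) := by
    rw [e1, e2]
    have : B / exp (-(t * w) + α) / (B / exp (t * w + α))
        = exp (t * w + α) / exp (-(t * w) + α) := by
      field_simp
    rw [this, ← exp_sub]
    ring_nf
  refine ⟨key, ?_⟩
  rw [key, Real.log_exp]
  field_simp
end

section
/- (Theorem 2, weight recovery.) Let n, m ∈ ℕ with m ≥ 2, let I : Fin n → ℝ be the input to the last layer, let W : Fin n → Fin m → ℝ be the weight matrix and b : Fin m → ℝ the bias vector. For each j define y_j = b_j + Σ_{i=1}^{n} I_i · W_{i,j} and the softmax output z_j = exp(y_j) / Σ_{j'} exp(y_{j'}). Fix i₀ and j₀ and assume I_{i₀} ≠ 0 (the input is non-vanishing for i₀). Define the faulted pre-activations ỹ by ỹ_{j₀} = y_{j₀} − 2·I_{i₀}·W_{i₀,j₀} and ỹ_j = y_j for j ≠ j₀, with faulted output z̃_{j₀} = exp(ỹ_{j₀}) / Σ_{j'} exp(ỹ_{j'}). Then W_{i₀,j₀} = (1/(2·I_{i₀})) · ln((1/z̃_{j₀} − 1) / (1/z_{j₀} − 1)). -/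
open Real Finset

/-- Theorem 2 (weight recovery by SNIFF): the last layer computes pre-activations
`y j = b j + ∑ i, I i * W i j` followed by a softmax; a sign bit flip fault on
the product `I i₀ * W i₀ j₀` replaces `y j₀` by `y j₀ - 2 * I i₀ * W i₀ j₀`
(all other coordinates unchanged). If `I i₀ ≠ 0` (non-vanishing input), then from
the correct output `z` and faulted output `z̃` at coordinate `j₀`, the targeted
weight is recovered as `W i₀ j₀ = (1/(2 * I i₀)) * log ((1/z̃ - 1) / (1/z - 1))`. -/
theorem sniff_weight_recovery_last_layer
    (n m : ℕ) (hm : 2 ≤ m)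
    (I : Fin n → ℝ) (W : Fin n → Fin m → ℝ) (b : Fin m → ℝ)
    (i₀ : Fin n) (j₀ : Fin m) (hI : I i₀ ≠ 0)
    (y : Fin m → ℝ) (hy : ∀ j, y j = b j + ∑ i, I i * W i j)
    (yf : Fin m → ℝ)
    (hyf : yf = Function.update y j₀ (y j₀ - 2 * I i₀ * W i₀ j₀))
    (z zf : ℝ)
    (hz : z = exp (y j₀) / ∑ j' : Fin m, exp (y j'))
    (hzf : zf = exp (yf j₀) / ∑ j' : Fin m, exp (yf j')) :
    W i₀ j₀ = (1 / (2 * I i₀)) * Real.log ((1 / zf - 1) / (1 / z - 1)) := by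
  have hTpos : 0 < ∑ j ∈ Finset.univ.erase j₀, exp (y j) := by
    apply Finset.sum_pos (fun j _ => exp_pos _)
    rw [← Finset.card_pos, Finset.card_erase_of_mem (Finset.mem_univ _), Finset.card_univ,
      Fintype.card_fin]
    omega
  set T : ℝ := ∑ j ∈ Finset.univ.erase j₀, exp (y j) with hT
  have hsum : ∑ j' : Fin m, exp (y j') = exp (y j₀) + T := by
    rw [hT, ← Finset.sum_erase_add Finset.univ _ (Finset.mem_univ j₀)]
    ring
  have hsumf : ∑ j' : Fin m, exp (yf j') = exp (yf j₀) + T := by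
    rw [hT, ← Finset.sum_erase_add Finset.univ _ (Finset.mem_univ j₀)]
    rw [add_comm]
    congr 1
    apply Finset.sum_congr rfl
    intro j hj
    rw [hyf, Function.update_of_ne (Finset.ne_of_mem_erase hj)]
  have hA : (0:ℝ) < exp (y j₀) := exp_pos _
  have hAf : (0:ℝ) < exp (yf j₀) := exp_pos _
  have h1 : 1 / z - 1 = T / exp (y j₀) := by
    rw [hz, hsum]; field_simp; ring
  have h2 : 1 / zf - 1 = T / exp (yf j₀) := by
    rw [hzf, hsumf]; field_simp; ring
  have hratio : (1 / zf - 1) / (1 / z - 1) = exp (y j₀ - yf j₀) := by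
    rw [h1, h2, Real.exp_sub]
    field_simp
  have hdiff : y j₀ - yf j₀ = 2 * I i₀ * W i₀ j₀ := by
    rw [hyf, Function.update_self]; ring
  rw [hratio, Real.log_exp, hdiff]
  field_simp
end

section
/- Let n, m ∈ ℕ with m ≥ 2, let I : Fin n → ℝ, W, W' : Fin n → Fin m → ℝ and b, b' : Fin m → ℝ. Suppose that for every choice of target indices (i₀, j₀) with I_{i₀} ≠ 0 and for every bias index j₀, the pairs (correct softmax output, SNIFF-faulted softmax output at coordinate j₀) produced by the parameters (W, b) and by (W', b') coincide, where the pre-activations are y_j = b_j + Σ_i I_i W_{i,j}, the softmax is z_j = exp(y_j)/Σ_{j'} exp(y_{j'}), a bias SNIFF replaces y_{j₀} by y_{j₀} − 2 b_{j₀}, and a weight SNIFF replaces y_{j₀} by y_{j₀} − 2 I_{i₀} W_{i₀,j₀}. Then b_{j₀} = b'_{j₀} for all j₀, and W_{i₀,j₀} = W'_{i₀,j₀} for all (i₀, j₀) with I_{i₀} ≠ 0. -/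
open Real Finset

/-- Pre-activations of the last layer: `y j = b j + ∑ i, I i * W i j`. -/
noncomputable def preact {n m : ℕ} (I : Fin n → ℝ) (W : Fin n → Fin m → ℝ)
    (b : Fin m → ℝ) (j : Fin m) : ℝ :=
  b j + ∑ i, I i * W i j

/-- Softmax output at coordinate `j`. -/
noncomputable def softmaxAt {m : ℕ} (y : Fin m → ℝ) (j : Fin m) : ℝ :=
  Real.exp (y j) / ∑ j' : Fin m, Real.exp (y j')

lemma sniff_key {m : ℕ} (hm : 2 ≤ m) (y y' : Fin m → ℝ) (j₀ : Fin m) (δ δ' : ℝ)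
    (h1 : softmaxAt y j₀ = softmaxAt y' j₀)
    (h2 : softmaxAt (Function.update y j₀ (y j₀ - δ)) j₀ =
          softmaxAt (Function.update y' j₀ (y' j₀ - δ')) j₀) : δ = δ' := by
  haveI : Nontrivial (Fin m) := Fin.nontrivial_iff_two_le.mpr hm
  set T : ℝ := ∑ j ∈ Finset.univ.erase j₀, Real.exp (y j) with hT
  set T' : ℝ := ∑ j ∈ Finset.univ.erase j₀, Real.exp (y' j) with hT'
  have hTpos : 0 < T := by
    apply Finset.sum_pos (fun j _ => Real.exp_pos _)
    obtain ⟨j, hj⟩ := exists_ne j₀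
    exact ⟨j, Finset.mem_erase.2 ⟨hj, Finset.mem_univ _⟩⟩
  have hT'pos : 0 < T' := by
    apply Finset.sum_pos (fun j _ => Real.exp_pos _)
    obtain ⟨j, hj⟩ := exists_ne j₀
    exact ⟨j, Finset.mem_erase.2 ⟨hj, Finset.mem_univ _⟩⟩
  have hsum : ∀ (z : Fin m → ℝ) (v : ℝ),
      ∑ j' : Fin m, Real.exp (Function.update z j₀ v j') =
      Real.exp v + ∑ j ∈ Finset.univ.erase j₀, Real.exp (z j) := by
    intro z v
    rw [← Finset.add_sum_erase _ _ (Finset.mem_univ j₀)]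
    simp only [Function.update_self]
    congr 1
    apply Finset.sum_congr rfl
    intro j hj
    rw [Function.update_of_ne (Finset.mem_erase.1 hj).1]
  have hsum0 : ∀ (z : Fin m → ℝ),
      ∑ j' : Fin m, Real.exp (z j') =
      Real.exp (z j₀) + ∑ j ∈ Finset.univ.erase j₀, Real.exp (z j) := by
    intro z
    rw [← Finset.add_sum_erase _ _ (Finset.mem_univ j₀)]
  set a := Real.exp (y j₀)
  set a' := Real.exp (y' j₀)
  have ha : 0 < a := Real.exp_pos _
  have ha' : 0 < a' := Real.exp_pos _
  have e1 : a / (a + T) = a' / (a' + T') := by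
    have := h1
    unfold softmaxAt at this
    rwa [hsum0 y, hsum0 y'] at this
  have e1' : a * T' = a' * T := by
    rw [div_eq_div_iff (by positivity) (by positivity)] at e1
    nlinarith [e1]
  have e2 : Real.exp (y j₀ - δ) / (Real.exp (y j₀ - δ) + T) =
            Real.exp (y' j₀ - δ') / (Real.exp (y' j₀ - δ') + T') := by
    have := h2
    unfold softmaxAt at this
    rwa [Function.update_self, Function.update_self, hsum y, hsum y'] at this
  have e2' : Real.exp (y j₀ - δ) * T' = Real.exp (y' j₀ - δ') * T := by
    rw [div_eq_div_iff (by positivity) (by positivity)] at e2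
    nlinarith [e2]
  rw [Real.exp_sub, Real.exp_sub] at e2'
  have key : Real.exp δ' * (a * T') = Real.exp δ * (a' * T) := by
    have hδ := Real.exp_pos δ
    have hδ' := Real.exp_pos δ'
    field_simp at e2'
    nlinarith [e2']
  rw [e1'] at key
  have : Real.exp δ' = Real.exp δ :=
    mul_right_cancel₀ (by positivity) key
  exact (Real.exp_injective this).symm

/-- Exact-extraction guarantee of the SNIFF attack: if the parameter sets
`(W, b)` and `(W', b')` produce the same pairs (correct softmax output at `j₀`,
SNIFF-faulted softmax output at `j₀`) for every bias index `j₀` (bias SNIFF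
replacing `y j₀` by `y j₀ - 2 * b j₀`) and for every target pair `(i₀, j₀)`
with `I i₀ ≠ 0` (weight SNIFF replacing `y j₀` by `y j₀ - 2 * I i₀ * W i₀ j₀`),
then all biases agree and all weights with nonzero input coordinate agree. -/
theorem sniff_exact_extraction
    (n m : ℕ) (hm : 2 ≤ m) (I : Fin n → ℝ)
    (W W' : Fin n → Fin m → ℝ) (b b' : Fin m → ℝ)
    (hcorrect : ∀ j₀ : Fin m,
      softmaxAt (preact I W b) j₀ = softmaxAt (preact I W' b') j₀)
    (hbias : ∀ j₀ : Fin m,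
      softmaxAt (Function.update (preact I W b) j₀ (preact I W b j₀ - 2 * b j₀)) j₀ =
      softmaxAt (Function.update (preact I W' b') j₀ (preact I W' b' j₀ - 2 * b' j₀)) j₀)
    (hweight : ∀ (i₀ : Fin n) (j₀ : Fin m), I i₀ ≠ 0 →
      softmaxAt (Function.update (preact I W b) j₀
        (preact I W b j₀ - 2 * I i₀ * W i₀ j₀)) j₀ =
      softmaxAt (Function.update (preact I W' b') j₀
        (preact I W' b' j₀ - 2 * I i₀ * W' i₀ j₀)) j₀) :
    (∀ j₀ : Fin m, b j₀ = b' j₀) ∧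
    (∀ (i₀ : Fin n) (j₀ : Fin m), I i₀ ≠ 0 → W i₀ j₀ = W' i₀ j₀) := by
  constructor
  · intro j₀
    have h := sniff_key hm _ _ j₀ (2 * b j₀) (2 * b' j₀) (hcorrect j₀) (hbias j₀)
    linarith
  · intro i₀ j₀ hI
    have h := sniff_key hm _ _ j₀ (2 * I i₀ * W i₀ j₀) (2 * I i₀ * W' i₀ j₀)
      (hcorrect j₀) (hweight i₀ j₀ hI)
    exact mul_left_cancel₀ (mul_ne_zero two_ne_zero hI) h
end
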